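/- For any subset A of a permutative semigroup S, Sep(A) is either empty or a reflexive unitary subsemigroup of S. -/

import Mathlib

/-- The product `a * l₁ * l₂ * ⋯ * lₘ` of an element and a list in a semigroup. -/
def pProd {S : Type*} [Semigroup S] (a : S) (l : List S) : S :=
  l.foldl (· * ·) a

/-- `S` satisfies the nontrivial permutation identity given by `σ` (on `n ≥ 2` letters). -/
def PermIdentity {S : Type*} [Semigroup S] (n : ℕ) (hn : 2 ≤ n)
    (σ : Equiv.Perm (Fin n)) : Prop :=
  ∀ x : Fin n → S,
    pProd (x ⟨0, by omega⟩) (List.ofFn x).tail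
      = pProd (x (σ ⟨0, by omega⟩)) (List.ofFn (x ∘ σ)).tail

/-- The separator of a subset `A` of a semigroup `S`. -/
def Separator {S : Type*} [Semigroup S] (A : Set S) : Set S :=
  {x | (∀ a ∈ A, x * a ∈ A) ∧ (∀ a ∈ A, a * x ∈ A) ∧
       (∀ a ∉ A, x * a ∉ A) ∧ (∀ a ∉ A, a * x ∉ A)}

section Infra
variable {S : Type*} [Semigroup S]

lemma myPP_cons (a b : S) (l : List S) : pProd a (b :: l) = pProd (a * b) l := rfl

lemma myPP_append (a : S) (l l' : List S) : pProd a (l ++ l') = pProd (pProd a l) l' := by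
  simp [pProd, List.foldl_append]

lemma myPP_mul (a b : S) (l : List S) : pProd (a * b) l = a * pProd b l := by
  induction l generalizing b with
  | nil => rfl
  | cons c t ih => rw [myPP_cons, myPP_cons, mul_assoc, ih]

/-- `c * z^k`, unit-free. -/
def swg (z c : S) : ℕ → S
  | 0 => c
  | (k+1) => swg z c k * z

/-- `z^k * c`, unit-free. -/
def pwg (z c : S) : ℕ → S
  | 0 => c
  | (k+1) => z * pwg z c k

@[simp] lemma swg_zero (z c : S) : swg z c 0 = c := rfl
@[simp] lemma swg_succ (z c : S) (k : ℕ) : swg z c (k+1) = swg z c k * z := rfl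
@[simp] lemma pwg_zero (z c : S) : pwg z c 0 = c := rfl
@[simp] lemma pwg_succ (z c : S) (k : ℕ) : pwg z c (k+1) = z * pwg z c k := rfl

lemma swg_shift (z c : S) (k : ℕ) : swg z (c * z) k = swg z c k * z := by
  induction k with
  | zero => rfl
  | succ k ih => rw [swg_succ, swg_succ, ih]

lemma pwg_shift (z c : S) (k : ℕ) : pwg z (z * c) k = z * pwg z c k := by
  induction k with
  | zero => rfl
  | succ k ih => rw [pwg_succ, pwg_succ, ih]

lemma myPP_rep (z c : S) (k : ℕ) : pProd c (List.replicate k z) = swg z c k := by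
  induction k generalizing c with
  | zero => rfl
  | succ k ih =>
      rw [List.replicate_succ, myPP_cons, ih, swg_shift, ← swg_succ]

lemma swg_mul (z c v : S) (k : ℕ) : swg z c k * v = c * pwg z v k := by
  induction k generalizing v with
  | zero => rfl
  | succ k ih => rw [swg_succ, mul_assoc, ih, pwg_shift, ← pwg_succ]

lemma mul_swg (z c d : S) (k : ℕ) : swg z (c * d) k = c * swg z d k := by
  induction k with
  | zero => rfl
  | succ k ih => rw [swg_succ, swg_succ, ih, mul_assoc]


lemma mySep_iff (A : Set S) (x : S) :
    x ∈ Separator A ↔ ∀ c : S, (x * c ∈ A ↔ c ∈ A) ∧ (c * x ∈ A ↔ c ∈ A) := by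
  constructor
  · rintro ⟨h1, h2, h3, h4⟩ c
    refine ⟨⟨fun h => ?_, fun h => h1 c h⟩, ⟨fun h => ?_, fun h => h2 c h⟩⟩
    · by_contra hc; exact h3 c hc h
    · by_contra hc; exact h4 c hc h
  · intro h
    exact ⟨fun c hc => (h c).1.mpr hc, fun c hc => (h c).2.mpr hc,
      fun c hc hx => hc ((h c).1.mp hx), fun c hc hx => hc ((h c).2.mp hx)⟩

end Infra

lemma mySM_le {n : ℕ} (f : Fin n → Fin n) (hf : StrictMono f) : ∀ k : Fin n, k ≤ f k := by
  have key : ∀ (m : ℕ) (hm : m < n), m ≤ (f ⟨m, hm⟩ : ℕ) := by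
    intro m
    induction m with
    | zero => intro hm; exact Nat.zero_le _
    | succ m ih =>
        intro hm
        have h1 : m < n := by omega
        have h2 : f ⟨m, h1⟩ < f ⟨m+1, hm⟩ := hf (by simp [Fin.lt_iff_val_lt_val])
        have := ih h1
        have := Fin.lt_iff_val_lt_val.mp h2
        omega
  intro k
  have h5 := key k.1 k.2
  rw [Fin.le_iff_val_le_val]
  convert h5

lemma mySM_id {n : ℕ} (f : Fin n → Fin n) (hf : StrictMono f) : ∀ k : Fin n, f k = k := by
  have hrev : StrictMono (fun k => Fin.rev (f (Fin.rev k))) := by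
    intro a b hab
    exact Fin.rev_lt_rev.mpr (hf (Fin.rev_lt_rev.mpr hab))
  have h2 := mySM_le _ hrev
  intro k
  have h3 := h2 (Fin.rev k)
  rw [Fin.rev_rev] at h3
  have h4 : f k ≤ k := by
    have h6 := Fin.rev_le_rev.mpr h3
    rwa [Fin.rev_rev, Fin.rev_rev] at h6
  exact le_antisymm h4 (mySM_le f hf k)

/-- Any non-identity permutation has a descent. -/
lemma myDescent {n : ℕ} (π : Equiv.Perm (Fin n)) (hπ : π ≠ 1) :
    ∃ i j : Fin n, (j : ℕ) = (i : ℕ) + 1 ∧ π j < π i := by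
  by_contra h
  push_neg at h
  have adj : ∀ i j : Fin n, (j : ℕ) = (i : ℕ) + 1 → π i < π j := by
    intro i j hij
    rcases lt_trichotomy (π i) (π j) with h1 | h1 | h1
    · exact h1
    · exfalso
      have : i = j := π.injective h1
      have := congrArg Fin.val this
      omega
    · exact absurd h1 (by simpa using h i j hij)
  have gap : ∀ (d : ℕ) (i j : Fin n), (j : ℕ) = (i : ℕ) + d + 1 → π i < π j := by
    intro d
    induction d with
    | zero => intro i j hij; exact adj i j (by omega)
    | succ d ih =>
        intro i j hij
        have hm : (i : ℕ) + d + 1 < n := by have := j.2; omega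
        have h1 := ih i ⟨(i : ℕ) + d + 1, hm⟩ (by simp)
        have h2 := adj ⟨(i : ℕ) + d + 1, hm⟩ j (by simpa using by omega)
        exact lt_trans h1 h2
  have hmono : StrictMono ⇑π := by
    intro i j hij
    have : (j : ℕ) = (i : ℕ) + ((j : ℕ) - (i : ℕ) - 1) + 1 := by
      have := Fin.lt_iff_val_lt_val.mp hij; omega
    exact gap _ i j this
  exact hπ (Equiv.ext (mySM_id _ hmono))

lemma myDich {n : ℕ} (hn : 2 ≤ n) (σ : Equiv.Perm (Fin n)) (hσ : σ ≠ 1) :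
    (∃ x y z : Fin n, x < y ∧ y < z ∧
      ((σ.symm y < σ.symm x ∧ σ.symm x < σ.symm z) ∨
       (σ.symm z < σ.symm y ∧ σ.symm y < σ.symm x) ∨
       (σ.symm x < σ.symm z ∧ σ.symm z < σ.symm y))) ∨
    (∃ m : ℕ, 0 < m ∧ m < n ∧ ∀ k : Fin n,
      (σ k : ℕ) = if (k : ℕ) < n - m then (k : ℕ) + m else (k : ℕ) + m - n) := by
  set τ := σ.symm with hτ
  by_cases hP : ∃ x y z : Fin n, x < y ∧ y < z ∧
      ((τ y < τ x ∧ τ x < τ z) ∨ (τ z < τ y ∧ τ y < τ x) ∨ (τ x < τ z ∧ τ z < τ y))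
  · exact Or.inl hP
  push_neg at hP
  right
  have h0n : 0 < n := by omega
  set D : Fin n := σ ⟨0, h0n⟩ with hD
  have hτD : τ D = ⟨0, h0n⟩ := σ.symm_apply_apply _
  have hτDv : (τ D : ℕ) = 0 := by rw [hτD]
  have hpos : ∀ p : Fin n, p ≠ D → 0 < (τ p : ℕ) := by
    intro p hp
    have h1 : τ p ≠ τ D := fun hc => hp (τ.injective hc)
    have h2 : (τ p : ℕ) ≠ (τ D : ℕ) := fun hc => h1 (Fin.ext hc)
    omega
  have fact3 : ∀ u v : Fin n, D < u → u < v → τ u < τ v := by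
    intro u v h1 h2
    rcases lt_trichotomy (τ u) (τ v) with h3 | h3 | h3
    · exact h3
    · exact absurd (τ.injective h3) (fun hc => absurd (hc ▸ h2) (lt_irrefl _))
    · exfalso
      have hc := hP D u v h1 h2
      have hv : τ D < τ v := by
        rw [Fin.lt_iff_val_lt_val, hτDv]
        exact hpos v (fun hc2 => absurd (hc2 ▸ (h1.trans h2)) (lt_irrefl _))
      exact absurd (hc.2.2 hv) (not_le.mpr h3)
  have fact1 : ∀ u v : Fin n, u < v → v < D → τ u < τ v := by
    intro u v h1 h2
    rcases lt_trichotomy (τ u) (τ v) with h3 | h3 | h3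
    · exact h3
    · exact absurd (τ.injective h3) (fun hc => absurd (hc ▸ h1) (lt_irrefl _))
    · exfalso
      have hc := hP u v D h1 h2
      have hv : τ D < τ v := by
        rw [Fin.lt_iff_val_lt_val, hτDv]
        exact hpos v (fun hc2 => absurd (hc2 ▸ h2) (lt_irrefl _))
      exact absurd (hc.2.1 hv) (not_le.mpr h3)
  have fact2 : ∀ u v : Fin n, u < D → D < v → τ v < τ u := by
    intro u v h1 h2
    rcases lt_trichotomy (τ v) (τ u) with h3 | h3 | h3
    · exact h3
    · exact absurd (τ.injective h3)
        (fun hc => absurd (hc ▸ (h1.trans h2)) (lt_irrefl _))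
    · exfalso
      have hc := hP u D v h1 h2
      have hu : τ D < τ u := by
        rw [Fin.lt_iff_val_lt_val, hτDv]
        exact hpos u (fun hc2 => absurd (hc2 ▸ h1) (lt_irrefl _))
      exact absurd (hc.1 hu) (not_le.mpr h3)
  have hDne : (D : ℕ) ≠ 0 := by
    intro hc
    apply hσ
    have hτmono : StrictMono ⇑τ := by
      intro u v huv
      rcases Nat.eq_zero_or_pos (u : ℕ) with hu0 | hu0
      · have hu : u = D := Fin.ext (by omega)
        rw [hu, Fin.lt_iff_val_lt_val, hτDv]
        exact hpos v (fun hc2 => by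
          have h5 := congrArg Fin.val hc2
          have h6 := Fin.lt_iff_val_lt_val.mp huv
          omega)
      · exact fact3 u v (Fin.lt_iff_val_lt_val.mpr (by omega)) huv
    have hτ1 : τ = 1 := Equiv.ext (mySM_id _ hτmono)
    rw [← Equiv.symm_symm σ, ← hτ, hτ1]; rfl
  set m : ℕ := (D : ℕ) with hm
  refine ⟨m, by omega, D.2, ?_⟩
  have hpv : ∀ k : Fin n, (if (k : ℕ) < n - m then (k : ℕ) + m else (k : ℕ) + m - n) < n := by
    intro k
    have := k.2
    split <;> omega
  have hρ : StrictMono (fun k : Fin n =>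
      τ ⟨if (k : ℕ) < n - m then (k : ℕ) + m else (k : ℕ) + m - n, hpv k⟩) := by
    intro k1 k2 hlt
    have hk1 := k1.2
    have hk2 := k2.2
    have hltv := Fin.lt_iff_val_lt_val.mp hlt
    have hmn : m < n := D.2
    simp only
    by_cases hc1 : (k1 : ℕ) < n - m
    · have e1 : (⟨if (k1 : ℕ) < n - m then (k1 : ℕ) + m else (k1 : ℕ) + m - n, hpv k1⟩ : Fin n)
          = ⟨(k1 : ℕ) + m, by omega⟩ := Fin.ext (by simp [if_pos hc1])
      rw [e1]
      by_cases hc2 : (k2 : ℕ) < n - m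
      · have e2 : (⟨if (k2 : ℕ) < n - m then (k2 : ℕ) + m else (k2 : ℕ) + m - n, hpv k2⟩ : Fin n)
            = ⟨(k2 : ℕ) + m, by omega⟩ := Fin.ext (by simp [if_pos hc2])
        rw [e2]
        by_cases hc0 : (k1 : ℕ) = 0
        · have e3 : (⟨(k1 : ℕ) + m, by omega⟩ : Fin n) = D := Fin.ext (by simp; omega)
          rw [e3, Fin.lt_iff_val_lt_val, hτDv]
          exact hpos _ (fun hc => by
            have := congrArg Fin.val hc
            simp at this
            omega)
        · exact fact3 _ _ (Fin.lt_iff_val_lt_val.mpr (show (D : ℕ) < (k1 : ℕ) + m by omega))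
            (Fin.lt_iff_val_lt_val.mpr (show (k1 : ℕ) + m < (k2 : ℕ) + m by omega))
      · have e2 : (⟨if (k2 : ℕ) < n - m then (k2 : ℕ) + m else (k2 : ℕ) + m - n, hpv k2⟩ : Fin n)
            = ⟨(k2 : ℕ) + m - n, by omega⟩ := Fin.ext (by simp [if_neg hc2])
        rw [e2]
        by_cases hc0 : (k1 : ℕ) = 0
        · have e3 : (⟨(k1 : ℕ) + m, by omega⟩ : Fin n) = D := Fin.ext (by simp; omega)
          rw [e3, Fin.lt_iff_val_lt_val, hτDv]
          exact hpos _ (fun hc => by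
            have := congrArg Fin.val hc
            simp at this
            omega)
        · exact fact2 _ _ (Fin.lt_iff_val_lt_val.mpr (show (k2 : ℕ) + m - n < (D : ℕ) by omega))
            (Fin.lt_iff_val_lt_val.mpr (show (D : ℕ) < (k1 : ℕ) + m by omega))
    · have e1 : (⟨if (k1 : ℕ) < n - m then (k1 : ℕ) + m else (k1 : ℕ) + m - n, hpv k1⟩ : Fin n)
          = ⟨(k1 : ℕ) + m - n, by omega⟩ := Fin.ext (by simp [if_neg hc1])
      have e2 : (⟨if (k2 : ℕ) < n - m then (k2 : ℕ) + m else (k2 : ℕ) + m - n, hpv k2⟩ : Fin n)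
          = ⟨(k2 : ℕ) + m - n, by omega⟩ := Fin.ext (by simp [if_neg (show ¬ (k2 : ℕ) < n - m by omega)])
      rw [e1, e2]
      exact fact1 _ _ (Fin.lt_iff_val_lt_val.mpr (show (k1:ℕ)+m-n < (k2:ℕ)+m-n by omega))
        (Fin.lt_iff_val_lt_val.mpr (show (k2 : ℕ) + m - n < (D : ℕ) by omega))
  have hid := mySM_id _ hρ
  intro k
  have h1 := hid k
  have h2 := congrArg σ h1
  rw [hτ, Equiv.apply_symm_apply] at h2
  have h4 := congrArg Fin.val h2
  simpa using h4.symm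

section Zones
variable {α : Type*}

lemma myGZ1 {s c : α} {L : List α} {u i : ℕ} (h : i < u)
    (hh : i < (List.replicate u s ++ c :: L).length) :
    (List.replicate u s ++ c :: L)[i] = s := by
  rw [List.getElem_append_left (by simpa using h)]
  exact List.getElem_replicate ..

lemma myGZ2 {s c : α} {L : List α} {u : ℕ}
    (hh : u < (List.replicate u s ++ c :: L).length) :
    (List.replicate u s ++ c :: L)[u] = c := by
  rw [List.getElem_append_right (by simp)]
  simp

lemma myGZ3 {s c : α} {L : List α} {u i : ℕ} (h : u < i)
    (hh : i < (List.replicate u s ++ c :: L).length) :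
    (List.replicate u s ++ c :: L)[i] = L[i - u - 1]'(by simp at hh ⊢; omega) := by
  rw [List.getElem_append_right (by simp; omega)]
  have h2 : i - (List.replicate u s).length = (i - u - 1) + 1 := by simp; omega
  simp only [h2]
  simp

end Zones

section OfFn
variable {S : Type*} (s : S)

/-- Two-slot word list. -/
def myL2 (n x y : ℕ) (X Y s : S) : List S :=
  List.replicate x s ++ X :: (List.replicate (y - x - 1) s ++ Y :: List.replicate (n - 1 - y) s)

lemma myL2_length (n x y : ℕ) (X Y : S) (hxy : x < y) (hyn : y < n) :
    (myL2 n x y X Y s).length = n := by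
  simp [myL2]; omega

lemma myOfFn_two {n : ℕ} (f : Fin n → S) (x y : ℕ) (X Y : S) (hxy : x < y) (hyn : y < n)
    (hf : ∀ k : Fin n, f k = if (k : ℕ) = x then X else if (k : ℕ) = y then Y else s) :
    List.ofFn f = myL2 n x y X Y s := by
  apply List.ext_getElem (by simp [myL2]; omega)
  intro i h1 h2
  have hin : i < n := by simpa using h1
  rw [List.getElem_ofFn]
  rw [hf ⟨i, hin⟩]
  show _ = (List.replicate x s ++ X :: (List.replicate (y - x - 1) s ++ Y ::
    List.replicate (n - 1 - y) s))[i]'(by simp; omega)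
  rcases lt_trichotomy i x with hc | hc | hc
  · rw [myGZ1 hc]
    simp only [Fin.val_mk]
    rw [if_neg (by omega), if_neg (by omega)]
  · subst hc
    rw [myGZ2]
    simp
  · rw [myGZ3 hc]
    simp only [Fin.val_mk]
    rw [if_neg (by omega)]
    rcases lt_trichotomy i y with hd | hd | hd
    · rw [if_neg (by omega), myGZ1 (by omega)]
    · subst hd
      rw [if_pos rfl, myGZ2]
    · rw [if_neg (by omega), myGZ3 (by omega)]
      rw [List.getElem_replicate]

/-- Three-slot word list. -/
def myL3 (n x y z : ℕ) (X Y Z s : S) : List S :=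
  List.replicate x s ++ X :: (List.replicate (y - x - 1) s ++ Y ::
    (List.replicate (z - y - 1) s ++ Z :: List.replicate (n - 1 - z) s))

lemma myL3_length (n x y z : ℕ) (X Y Z : S) (hxy : x < y) (hyz : y < z) (hzn : z < n) :
    (myL3 n x y z X Y Z s).length = n := by
  simp [myL3]; omega

lemma myOfFn_three {n : ℕ} (f : Fin n → S) (x y z : ℕ) (X Y Z : S)
    (hxy : x < y) (hyz : y < z) (hzn : z < n)
    (hf : ∀ k : Fin n, f k = if (k : ℕ) = x then X else if (k : ℕ) = y then Y
      else if (k : ℕ) = z then Z else s) :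
    List.ofFn f = myL3 n x y z X Y Z s := by
  apply List.ext_getElem (by simp [myL3]; omega)
  intro i h1 h2
  have hin : i < n := by simpa using h1
  rw [List.getElem_ofFn]
  rw [hf ⟨i, hin⟩]
  show _ = (List.replicate x s ++ X :: (List.replicate (y - x - 1) s ++ Y ::
    (List.replicate (z - y - 1) s ++ Z :: List.replicate (n - 1 - z) s)))[i]'(by simp; omega)
  simp only [Fin.val_mk]
  rcases lt_trichotomy i x with hc | hc | hc
  · rw [myGZ1 hc, if_neg (by omega), if_neg (by omega), if_neg (by omega)]
  · subst hc
    rw [myGZ2, if_pos rfl]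
  · rw [myGZ3 hc, if_neg (by omega)]
    rcases lt_trichotomy i y with hd | hd | hd
    · rw [if_neg (by omega), if_neg (by omega), myGZ1 (by omega)]
    · subst hd
      rw [if_pos rfl, myGZ2]
    · rw [if_neg (by omega), myGZ3 (by omega)]
      have hidx : i - x - 1 - (y - x - 1) - 1 = i - y - 1 := by omega
      simp only [hidx]
      rcases lt_trichotomy i z with he | he | he
      · rw [if_neg (by omega), myGZ1 (by omega)]
      · subst he
        rw [if_pos rfl, myGZ2]
      · rw [if_neg (by omega), myGZ3 (by omega), List.getElem_replicate]

end OfFn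
section Eval
variable {S : Type*} [Semigroup S]

lemma myPP_L2eval (n x y : ℕ) (X Y s c : S) :
    pProd c (myL2 n x y X Y s) = swg s (swg s (swg s c x * X) (y - x - 1) * Y) (n - 1 - y) := by
  unfold myL2
  rw [myPP_append, myPP_rep, myPP_cons, myPP_append, myPP_rep, myPP_cons, myPP_rep]

lemma myPP_L3eval (n x y z : ℕ) (X Y Z s c : S) :
    pProd c (myL3 n x y z X Y Z s) =
      swg s (swg s (swg s (swg s c x * X) (y - x - 1) * Y) (z - y - 1) * Z) (n - 1 - z) := by
  unfold myL3
  rw [myPP_append, myPP_rep, myPP_cons, myPP_append, myPP_rep, myPP_cons,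
    myPP_append, myPP_rep, myPP_cons, myPP_rep]

end Eval
section MainRefl
variable {S : Type*} [Semigroup S]

lemma myRefl (n : ℕ) (hn : 2 ≤ n) (σ : Equiv.Perm (Fin n)) (hσ : σ ≠ 1)
    (hperm : PermIdentity (S := S) n hn σ) (A : Set S) (a b : S)
    (hab : a * b ∈ Separator A) : b * a ∈ Separator A := by
  obtain ⟨N, rfl⟩ : ∃ N, n = N + 2 := ⟨n - 2, by omega⟩
  set s : S := a * b with hs
  have hsep := (mySep_iff A s).mp hab
  have hsl : ∀ c : S, s * c ∈ A ↔ c ∈ A := fun c => (hsep c).1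
  have hsr : ∀ c : S, c * s ∈ A ↔ c ∈ A := fun c => (hsep c).2
  have spl : ∀ (k : ℕ) (c : S), pwg s c k ∈ A ↔ c ∈ A := by
    intro k
    induction k with
    | zero => intro c; rfl
    | succ k ih => intro c; rw [pwg_succ, hsl]; exact ih c
  have spr : ∀ (k : ℕ) (c : S), swg s c k ∈ A ↔ c ∈ A := by
    intro k
    induction k with
    | zero => intro c; rfl
    | succ k ih => intro c; rw [swg_succ, hsr]; exact ih c
  -- s-prefixed permutation identity
  have hl : ∀ g : Fin (N+2) → S,
      pProd s (List.ofFn g) = s * pProd (g 0) (List.ofFn g).tail := by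
    intro g
    rw [List.ofFn_succ, List.tail_cons, myPP_cons, myPP_mul]
  have hua : ∀ f : Fin (N+2) → S,
      pProd s (List.ofFn f) = pProd s (List.ofFn (f ∘ ⇑σ)) := by
    intro f
    rw [hl f, hl (f ∘ ⇑σ)]
    exact congrArg (fun t => s * t) (hperm f)
  set τ := σ.symm with hτdef
  have hiff : ∀ (u k : Fin (N+2)), ((σ k : ℕ) = (u : ℕ)) ↔ ((k : ℕ) = ((τ u) : ℕ)) := by
    intro u k
    constructor
    · intro h
      have h2 : σ k = u := Fin.ext h
      rw [σ.apply_eq_iff_eq_symm_apply] at h2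
      exact congrArg Fin.val h2
    · intro h
      have h2 : k = τ u := Fin.ext h
      rw [← σ.apply_eq_iff_eq_symm_apply] at h2
      exact congrArg Fin.val h2
  -- reduced two- and three-slot membership lemmas
  have red2 : ∀ (x y : ℕ) (U V : S), pProd s (myL2 (N+2) x y U V s) ∈ A ↔
      U * pwg s V (y - x - 1) ∈ A := by
    intro x y U V
    rw [myPP_L2eval, spr, swg_mul s (swg s s x * U) V (y - x - 1), mul_assoc,
      swg_mul s s _ x, hsl, spl]
  -- F1 from a descent of τ
  have hτ1 : τ ≠ 1 := by
    intro hc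
    apply hσ
    rw [← σ.symm_symm, ← hτdef, hc]
    rfl
  obtain ⟨di, dj, hdij, hdlt⟩ := myDescent τ hτ1
  have hdlt' : ((τ dj : Fin (N+2)) : ℕ) < ((τ di : Fin (N+2)) : ℕ) := hdlt
  have F1 : ∀ U V : S, U * V ∈ A ↔ V * pwg s U ((τ di : ℕ) - (τ dj : ℕ) - 1) ∈ A := by
    intro U V
    have hofl := myOfFn_two s
      (fun k : Fin (N+2) => if (k : ℕ) = (di : ℕ) then U else if (k : ℕ) = (dj : ℕ) then V else s)
      (di : ℕ) (dj : ℕ) U V (by omega) dj.2 (fun k => rfl)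
    have hne : ((τ di : ℕ) : ℕ) ≠ (τ dj : ℕ) := by omega
    have hcomp : ∀ k : Fin (N+2),
        ((fun k : Fin (N+2) => if (k : ℕ) = (di : ℕ) then U
            else if (k : ℕ) = (dj : ℕ) then V else s) ∘ ⇑σ) k
          = if (k : ℕ) = (τ dj : ℕ) then V else if (k : ℕ) = (τ di : ℕ) then U else s := by
      intro k
      simp only [Function.comp_apply]
      simp only [hiff di k]
      simp only [hiff dj k]
      split_ifs <;> first | rfl | omega
    have hofr := myOfFn_two s _ (τ dj : ℕ) (τ di : ℕ) V U (by omega) (τ di).2 hcomp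
    have hEq := hua (fun k : Fin (N+2) =>
      if (k : ℕ) = (di : ℕ) then U else if (k : ℕ) = (dj : ℕ) then V else s)
    rw [hofl, hofr] at hEq
    have h1 := red2 (di : ℕ) (dj : ℕ) U V
    have h2 := red2 (τ dj : ℕ) (τ di : ℕ) V U
    rw [hEq] at h1
    rw [show ((dj : ℕ) - (di : ℕ) - 1) = 0 by omega, pwg_zero] at h1
    exact h1.symm.trans h2
  set μ : ℕ := (τ di : ℕ) - (τ dj : ℕ) - 1 with hμ
  have U2 : ∀ u v : S, u * (s * v) ∈ A ↔ u * v ∈ A := by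
    intro u v
    rw [F1 u (s * v), mul_assoc, hsl, ← F1 u v]
  have U2pw : ∀ (k : ℕ) (u v : S), u * pwg s v k ∈ A ↔ u * v ∈ A := by
    intro k
    induction k with
    | zero => intro u v; rw [pwg_zero]
    | succ k ih => intro u v; rw [pwg_succ, U2, ih]
  have Rlem : ∀ (k : ℕ) (c v : S), swg s c k * v ∈ A ↔ c * v ∈ A := by
    intro k c v
    rw [swg_mul]
    exact U2pw k c v
  have U3 : ∀ u v : S, u * v ∈ A ↔ v * u ∈ A := by
    intro u v
    rw [F1 u v]
    exact U2pw μ v u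
  have red3 : ∀ (x y z : ℕ) (X Y Z : S), pProd s (myL3 (N+2) x y z X Y Z s) ∈ A ↔
      X * (Y * Z) ∈ A := by
    intro x y z X Y Z
    rw [myPP_L3eval, spr, Rlem, mul_assoc, Rlem, mul_assoc, swg_mul s s _ x, hsl, spl]
  have redmul : ∀ (x g2 g3 : ℕ) (U V u : S),
      swg s (swg s (swg s s x * U) g2 * V) g3 * u ∈ A ↔ U * (V * u) ∈ A := by
    intro x g2 g3 U V u
    rw [Rlem, mul_assoc, Rlem, mul_assoc, swg_mul s s _ x, hsl, spl]
  -- main dichotomy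
  have goal1 : ∀ u : S, (b * a) * u ∈ A ↔ u ∈ A := by
    rcases myDich (by omega) σ hσ with ⟨x, y, z, hxy, hyz, hpat⟩ | ⟨m, hm0, hmn, hrot⟩
    · -- pattern case
      have hxyv : (x : ℕ) < (y : ℕ) := hxy
      have hyzv : (y : ℕ) < (z : ℕ) := hyz
      have dxy : ((τ x : ℕ) : ℕ) ≠ (τ y : ℕ) := by
        intro hc
        have : x = y := τ.injective (Fin.ext hc)
        have := congrArg Fin.val this
        omega
      have dxz : ((τ x : ℕ) : ℕ) ≠ (τ z : ℕ) := by
        intro hc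
        have : x = z := τ.injective (Fin.ext hc)
        have := congrArg Fin.val this
        omega
      have dyz : ((τ y : ℕ) : ℕ) ≠ (τ z : ℕ) := by
        intro hc
        have : y = z := τ.injective (Fin.ext hc)
        have := congrArg Fin.val this
        omega
      rcases hpat with ⟨h1, h2⟩ | ⟨h1, h2⟩ | ⟨h1, h2⟩
      · -- pattern 213 : τ y < τ x < τ z ; slots (b, a, u)
        intro u
        have hofl := myOfFn_three s
          (fun k : Fin (N+2) => if (k : ℕ) = (x : ℕ) then b else if (k : ℕ) = (y : ℕ) then a
            else if (k : ℕ) = (z : ℕ) then u else s)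
          (x : ℕ) (y : ℕ) (z : ℕ) b a u hxyv hyzv z.2 (fun k => rfl)
        have hcomp : ∀ k : Fin (N+2),
            ((fun k : Fin (N+2) => if (k : ℕ) = (x : ℕ) then b else if (k : ℕ) = (y : ℕ) then a
              else if (k : ℕ) = (z : ℕ) then u else s) ∘ ⇑σ) k
            = if (k : ℕ) = (τ y : ℕ) then a else if (k : ℕ) = (τ x : ℕ) then b
              else if (k : ℕ) = (τ z : ℕ) then u else s := by
          intro k
          simp only [Function.comp_apply]
          simp only [hiff x k]
          simp only [hiff y k]
          simp only [hiff z k]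
          split_ifs <;> first | rfl | omega
        have hofr := myOfFn_three s _ (τ y : ℕ) (τ x : ℕ) (τ z : ℕ) a b u h1 h2 (τ z).2 hcomp
        have hEq := hua (fun k : Fin (N+2) =>
          if (k : ℕ) = (x : ℕ) then b else if (k : ℕ) = (y : ℕ) then a
            else if (k : ℕ) = (z : ℕ) then u else s)
        rw [hofl, hofr] at hEq
        have hL := red3 (x : ℕ) (y : ℕ) (z : ℕ) b a u
        have hR := red3 (τ y : ℕ) (τ x : ℕ) (τ z : ℕ) a b u
        rw [hEq] at hL
        have hfin : b * (a * u) ∈ A ↔ a * (b * u) ∈ A := hL.symm.trans hR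
        rw [mul_assoc, hfin, ← mul_assoc, ← hs, hsl]
      · -- pattern 321 : τ z < τ y < τ x ; slots (b, a, u)
        intro u
        have hofl := myOfFn_three s
          (fun k : Fin (N+2) => if (k : ℕ) = (x : ℕ) then b else if (k : ℕ) = (y : ℕ) then a
            else if (k : ℕ) = (z : ℕ) then u else s)
          (x : ℕ) (y : ℕ) (z : ℕ) b a u hxyv hyzv z.2 (fun k => rfl)
        have hcomp : ∀ k : Fin (N+2),
            ((fun k : Fin (N+2) => if (k : ℕ) = (x : ℕ) then b else if (k : ℕ) = (y : ℕ) then a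
              else if (k : ℕ) = (z : ℕ) then u else s) ∘ ⇑σ) k
            = if (k : ℕ) = (τ z : ℕ) then u else if (k : ℕ) = (τ y : ℕ) then a
              else if (k : ℕ) = (τ x : ℕ) then b else s := by
          intro k
          simp only [Function.comp_apply]
          simp only [hiff x k]
          simp only [hiff y k]
          simp only [hiff z k]
          split_ifs <;> first | rfl | omega
        have hofr := myOfFn_three s _ (τ z : ℕ) (τ y : ℕ) (τ x : ℕ) u a b h1 h2 (τ x).2 hcomp
        have hEq := hua (fun k : Fin (N+2) =>
          if (k : ℕ) = (x : ℕ) then b else if (k : ℕ) = (y : ℕ) then a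
            else if (k : ℕ) = (z : ℕ) then u else s)
        rw [hofl, hofr] at hEq
        have hL := red3 (x : ℕ) (y : ℕ) (z : ℕ) b a u
        have hR := red3 (τ z : ℕ) (τ y : ℕ) (τ x : ℕ) u a b
        rw [hEq] at hL
        have hfin : b * (a * u) ∈ A ↔ u * (a * b) ∈ A := hL.symm.trans hR
        rw [mul_assoc, hfin, ← hs, hsr]
      · -- pattern 132 : τ x < τ z < τ y ; slots (u, b, a) — gives goal2 first
        intro u
        have hofl := myOfFn_three s
          (fun k : Fin (N+2) => if (k : ℕ) = (x : ℕ) then u else if (k : ℕ) = (y : ℕ) then b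
            else if (k : ℕ) = (z : ℕ) then a else s)
          (x : ℕ) (y : ℕ) (z : ℕ) u b a hxyv hyzv z.2 (fun k => rfl)
        have hcomp : ∀ k : Fin (N+2),
            ((fun k : Fin (N+2) => if (k : ℕ) = (x : ℕ) then u else if (k : ℕ) = (y : ℕ) then b
              else if (k : ℕ) = (z : ℕ) then a else s) ∘ ⇑σ) k
            = if (k : ℕ) = (τ x : ℕ) then u else if (k : ℕ) = (τ z : ℕ) then a
              else if (k : ℕ) = (τ y : ℕ) then b else s := by
          intro k
          simp only [Function.comp_apply]
          simp only [hiff x k]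
          simp only [hiff y k]
          simp only [hiff z k]
          split_ifs <;> first | rfl | omega
        have hofr := myOfFn_three s _ (τ x : ℕ) (τ z : ℕ) (τ y : ℕ) u a b h1 h2 (τ y).2 hcomp
        have hEq := hua (fun k : Fin (N+2) =>
          if (k : ℕ) = (x : ℕ) then u else if (k : ℕ) = (y : ℕ) then b
            else if (k : ℕ) = (z : ℕ) then a else s)
        rw [hofl, hofr] at hEq
        have hL := red3 (x : ℕ) (y : ℕ) (z : ℕ) u b a
        have hR := red3 (τ x : ℕ) (τ z : ℕ) (τ y : ℕ) u a b
        rw [hEq] at hL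
        have hfin : u * (b * a) ∈ A ↔ u * (a * b) ∈ A := hL.symm.trans hR
        rw [U3 (b * a) u, hfin, ← hs, hsr]
    · -- rotation case
      intro u
      have hofl := myOfFn_two s
        (fun k : Fin (N+2) => if (k : ℕ) = (0 : ℕ) then b else if (k : ℕ) = m then a else s)
        0 m b a hm0 hmn (fun k => rfl)
      have hcomp : ∀ k : Fin (N+2),
          ((fun k : Fin (N+2) => if (k : ℕ) = (0 : ℕ) then b else if (k : ℕ) = m then a
            else s) ∘ ⇑σ) k
          = if (k : ℕ) = (0 : ℕ) then a else if (k : ℕ) = (N+2) - m then b else s := by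
        intro k
        simp only [Function.comp_apply]
        have hσk := hrot k
        have hk := k.2
        rcases lt_or_ge (k : ℕ) ((N+2) - m) with hc | hc
        · rw [if_pos hc] at hσk
          by_cases h1 : (k : ℕ) = 0
          · rw [if_neg (by omega), if_pos (by omega), if_pos h1]
          · rw [if_neg (by omega), if_neg (by omega), if_neg h1, if_neg (by omega)]
        · rw [if_neg (by omega)] at hσk
          by_cases h2 : (k : ℕ) = (N+2) - m
          · rw [if_pos (by omega), if_neg (by omega), if_pos h2]
          · rw [if_neg (by omega), if_neg (by omega), if_neg (by omega), if_neg h2]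
      have hofr := myOfFn_two s _ 0 ((N+2) - m) a b (by omega) (by omega) hcomp
      have hEq := hua (fun k : Fin (N+2) =>
        if (k : ℕ) = (0 : ℕ) then b else if (k : ℕ) = m then a else s)
      rw [hofl, hofr] at hEq
      have hEqu := congrArg (fun t => t * u) hEq
      rw [myPP_L2eval, myPP_L2eval] at hEqu
      have hL := redmul 0 (m - 0 - 1) ((N+2) - 1 - m) b a u
      have hR := redmul 0 ((N+2) - m - 0 - 1) ((N+2) - 1 - ((N+2) - m)) a b u
      rw [hEqu] at hL
      have hfin : b * (a * u) ∈ A ↔ a * (b * u) ∈ A := hL.symm.trans hR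
      rw [mul_assoc, hfin, ← mul_assoc, ← hs, hsl]
  have goal2 : ∀ u : S, u * (b * a) ∈ A ↔ u ∈ A := by
    intro u
    rw [← U3 (b * a) u]
    exact goal1 u
  exact (mySep_iff A (b * a)).mpr (fun c => ⟨goal1 c, goal2 c⟩)

end MainRefl
theorem permutative_sep_empty_or_reflexive_unitary_subsemigroup {S : Type*} [Semigroup S]
    (n : ℕ) (hn : 2 ≤ n) (σ : Equiv.Perm (Fin n)) (hσ : σ ≠ 1)
    (hperm : PermIdentity (S := S) n hn σ) (A : Set S) :
    Separator A = ∅ ∨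
      ((∀ a ∈ Separator A, ∀ b ∈ Separator A, a * b ∈ Separator A) ∧
       (∀ a b : S, a * b ∈ Separator A → b * a ∈ Separator A) ∧
       (∀ a b : S, a ∈ Separator A → a * b ∈ Separator A → b ∈ Separator A) ∧
       (∀ a b : S, a ∈ Separator A → b * a ∈ Separator A → b ∈ Separator A)) := by
  right
  refine ⟨?_, ?_, ?_, ?_⟩
  · -- subsemigroup
    intro u hu v hv
    rw [mySep_iff] at hu hv ⊢
    intro c
    constructor
    · rw [mul_assoc]
      exact ((hu (v * c)).1).trans ((hv c).1)
    · rw [← mul_assoc]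
      exact ((hv (c * u)).2).trans ((hu c).2)
  · -- reflexive
    exact fun a b hab => myRefl n hn σ hσ hperm A a b hab
  · -- unitary, right divisors
    intro x y hx hxy
    have hyx : y * x ∈ Separator A := myRefl n hn σ hσ hperm A x y hxy
    rw [mySep_iff] at hx hxy hyx ⊢
    intro c
    constructor
    · have h1 := (hx (y * c)).1
      have h2 := (hxy c).1
      rw [mul_assoc] at h2
      exact h1.symm.trans h2
    · have h1 := (hx (c * y)).2
      have h2 := (hyx c).2
      rw [← mul_assoc] at h2
      exact h1.symm.trans h2
  · -- unitary, left divisors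
    intro x y hx hyx
    have hxy : x * y ∈ Separator A := myRefl n hn σ hσ hperm A y x hyx
    rw [mySep_iff] at hx hxy hyx ⊢
    intro c
    constructor
    · have h1 := (hx (y * c)).1
      have h2 := (hxy c).1
      rw [mul_assoc] at h2
      exact h1.symm.trans h2
    · have h1 := (hx (c * y)).2
      have h2 := (hyx c).2
      rw [← mul_assoc] at h2
      exact h1.symm.trans h2
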